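/- For α > 0 and Δ ≥ 1 real, the function α ↦ α/(1 + α/√Δ + 2α²)² attains its maximum on (0,∞) at α₀ = 1/(√6·(√(1 + 1/(24Δ)) + √(1/(24Δ)))), and α₀ ≤ 1/√6. -/

import Mathlib

theorem stmt_10 (Δ : ℝ) (hΔ : 1 ≤ Δ) :
    IsMaxOn (fun α : ℝ => α / (1 + α / Real.sqrt Δ + 2*α^2)^2) (Set.Ioi 0)
      (1 / (Real.sqrt 6 * (Real.sqrt (1 + 1/(24*Δ)) + Real.sqrt (1/(24*Δ))))) ∧
    1 / (Real.sqrt 6 * (Real.sqrt (1 + 1/(24*Δ)) + Real.sqrt (1/(24*Δ))))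
      ≤ 1 / Real.sqrt 6 := by
  have hΔ0 : (0:ℝ) < Δ := lt_of_lt_of_le one_pos hΔ
  have hsΔ : (0:ℝ) < Real.sqrt Δ := Real.sqrt_pos.mpr hΔ0
  set d : ℝ := 1 / Real.sqrt Δ with hd_def
  have hd : 0 < d := by positivity
  set u : ℝ := Real.sqrt (1 + 1/(24*Δ)) with hu_def
  set v : ℝ := Real.sqrt (1/(24*Δ)) with hv_def
  have hu : 0 < u := Real.sqrt_pos.mpr (by positivity)
  have hv : 0 < v := Real.sqrt_pos.mpr (by positivity)
  have hu2 : u^2 = 1 + 1/(24*Δ) := Real.sq_sqrt (by positivity)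
  have hv2 : v^2 = 1/(24*Δ) := Real.sq_sqrt (by positivity)
  have huv2 : u^2 = 1 + v^2 := by rw [hu2, hv2]
  have hs6 : (0:ℝ) < Real.sqrt 6 := Real.sqrt_pos.mpr (by norm_num)
  have hs62 : (Real.sqrt 6)^2 = 6 := Real.sq_sqrt (by norm_num)
  set a : ℝ := 1 / (Real.sqrt 6 * (u + v)) with ha_def
  have ha : 0 < a := by positivity
  -- d = 2 * sqrt 6 * v
  have hdv : d = 2 * Real.sqrt 6 * v := by
    rw [hd_def, hv_def]
    rw [show (1:ℝ)/(24*Δ) = (1/(2*Real.sqrt 6 * Real.sqrt Δ))^2 by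
      field_simp
      nlinarith [hs62, Real.sq_sqrt hΔ0.le, hs6, hsΔ]]
    rw [Real.sqrt_sq (by positivity)]
    field_simp
  -- key identity 6a^2 + d*a = 1
  have hkey : 6 * a^2 + d * a = 1 := by
    rw [ha_def, hdv]
    have huv : (0:ℝ) < Real.sqrt 6 * (u + v) := by positivity
    field_simp
    linear_combination (-6) * huv2 +
      (2*v*(u+v) - (u+v)^2) * hs62
  constructor
  · intro x hx
    simp only [Set.mem_Ioi] at hx
    simp only [Set.mem_setOf_eq]
    show x / (1 + x / Real.sqrt Δ + 2*x^2)^2 ≤ a / (1 + a / Real.sqrt Δ + 2*a^2)^2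
    have hxd : x / Real.sqrt Δ = d * x := by rw [hd_def]; field_simp
    have had : a / Real.sqrt Δ = d * a := by rw [hd_def]; field_simp
    rw [hxd, had]
    have hgx : (0:ℝ) < (1 + d*x + 2*x^2)^2 := by positivity
    have hga : (0:ℝ) < (1 + d*a + 2*a^2)^2 := by positivity
    rw [div_le_div_iff₀ hgx hga]
    have hQ : a * (a * (1 + d*x + 2*x^2)^2 - x * (1 + d*a + 2*a^2)^2)
        = (x - a)^2 * (4*a^2*x^2 + (4*a^2*d + 8*a^3)*x + 1) := by
      linear_combination ((1 + d*a + 2*a^2) * x * (x - a)) * hkey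
    nlinarith [hQ, mul_pos ha hx, mul_pos hd hx, sq_nonneg (x-a),
      mul_nonneg (sq_nonneg (x-a)) (by positivity :
        (0:ℝ) ≤ 4*a^2*x^2 + (4*a^2*d + 8*a^3)*x + 1)]
  · rw [ha_def]
    have h1 : (1:ℝ) ≤ u := by
      have h := Real.sqrt_le_sqrt (le_add_of_nonneg_right (by positivity : (0:ℝ) ≤ 1/(24*Δ)) : (1:ℝ) ≤ 1 + 1/(24*Δ))
      rw [hu_def]
      simpa using h
    have huv1 : (1:ℝ) ≤ u + v := by linarith
    have hle : Real.sqrt 6 ≤ Real.sqrt 6 * (u + v) := by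
      nth_rewrite 1 [← mul_one (Real.sqrt 6)]
      exact mul_le_mul_of_nonneg_left huv1 hs6.le
    exact one_div_le_one_div_of_le hs6 hle
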